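/- arXiv:2307.13402 — 5 statements merged into one kernel-verified Lean document; each statement's English description precedes it below -/
import Mathlib

section
/- Let q, λ : [0,T] → ℝⁿ be C² curves with q̈ = f(q) + λ and λ̈ = (Df(q))ᵀ λ on [0,T], and suppose the boundary conditions λ̇(T) = ∇_q φ(q(T), q̇(T)) and λ(T) = -∇_v φ(q(T), q̇(T)) hold. Then for every C² variation (δq, δλ) : [0,T] → ℝⁿ × ℝⁿ with δq(0) = 0 and δq̇(0) = 0, the first variation of the new augmented objective vanishes: d/ds |_{s=0} [ φ(q(T)+s δq(T), q̇(T)+s δq̇(T)) + ⟨λ(T)+s δλ(T), q̇(T)+s δq̇(T)⟩ - ⟨λ(0)+s δλ(0), q̇(0)⟩ + ∫₀ᵀ ( ½‖λ+s δλ‖² - ⟨λ̇+s δλ̇, q̇+s δq̇⟩ - ⟨λ+s δλ, f(q+s δq)⟩ - ⟨λ+s δλ, λ+s δλ⟩ ) dt ] = 0. -/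
open scoped RealInnerProductSpace

lemma aux_smooth {E : Type*} [NormedAddCommGroup E] [NormedSpace ℝ E] {c : ℝ → E}
    (h : ContDiff ℝ 2 c) :
    Differentiable ℝ c ∧ Differentiable ℝ (deriv c) ∧ Continuous (deriv (deriv c)) := by
  have h2 : ContDiff ℝ ((1 : ℕ) + 1) c := by exact_mod_cast h
  rw [contDiff_succ_iff_deriv] at h2
  obtain ⟨hd, -, h1⟩ := h2
  exact ⟨hd, h1.differentiable (by simp), h1.continuous_deriv le_rfl⟩

lemma aux_inner_gradient {n : ℕ} (g : EuclideanSpace ℝ (Fin n) → ℝ)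
    (x y : EuclideanSpace ℝ (Fin n)) :
    ⟪gradient g x, y⟫ = fderiv ℝ g x y := by
  simp [gradient, InnerProductSpace.toDual_symm_apply]

/-- Solutions of `q̈ = f(q) + λ`, `λ̈ = (Df(q))ᵀ λ` satisfying the boundary
conditions `λ̇(T) = ∇_q φ(q(T), q̇(T))`, `λ(T) = -∇_v φ(q(T), q̇(T))` make the first
variation of the new augmented objective vanish, for variations vanishing (to first
order) at `t = 0`. -/
theorem firstVariation_new_augmented_objective_eq_zero (n : ℕ) (T : ℝ) (hT : 0 < T)
    (f : EuclideanSpace ℝ (Fin n) → EuclideanSpace ℝ (Fin n)) (hf : ContDiff ℝ 1 f)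
    (φ : EuclideanSpace ℝ (Fin n) → EuclideanSpace ℝ (Fin n) → ℝ)
    (hφ : ContDiff ℝ 1 (Function.uncurry φ))
    (q l : ℝ → EuclideanSpace ℝ (Fin n))
    (hq : ContDiff ℝ 2 q) (hl : ContDiff ℝ 2 l)
    (heq1 : ∀ t ∈ Set.Icc (0 : ℝ) T, deriv (deriv q) t = f (q t) + l t)
    (heq2 : ∀ t ∈ Set.Icc (0 : ℝ) T, deriv (deriv l) t = (fderiv ℝ f (q t)).adjoint (l t))
    (hbdq : deriv l T = gradient (fun x => φ x (deriv q T)) (q T))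
    (hbdv : l T = -gradient (fun x => φ (q T) x) (deriv q T))
    (δq δl : ℝ → EuclideanSpace ℝ (Fin n))
    (hδq : ContDiff ℝ 2 δq) (hδl : ContDiff ℝ 2 δl)
    (hδq0 : δq 0 = 0) (hδqdot0 : deriv δq 0 = 0) :
    deriv (fun s : ℝ =>
      φ (q T + s • δq T) (deriv q T + s • deriv δq T) +
      ⟪l T + s • δl T, deriv q T + s • deriv δq T⟫ -
      ⟪l 0 + s • δl 0, deriv q 0⟫ +
      ∫ t in (0 : ℝ)..T,
        ((1 / 2 : ℝ) * ‖l t + s • δl t‖ ^ 2 -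
          ⟪deriv l t + s • deriv δl t, deriv q t + s • deriv δq t⟫ -
          ⟪l t + s • δl t, f (q t + s • δq t)⟫ -
          ⟪l t + s • δl t, l t + s • δl t⟫)) 0 = 0 := by
  obtain ⟨hqd, hq'd, hq''c⟩ := aux_smooth hq
  obtain ⟨hld, hl'd, hl''c⟩ := aux_smooth hl
  obtain ⟨hδqd, hδq'd, hδq''c⟩ := aux_smooth hδq
  obtain ⟨hδld, hδl'd, hδl''c⟩ := aux_smooth hδl
  have hfd := hf.differentiable one_ne_zero
  have hDfc : Continuous (fderiv ℝ f) := hf.continuous_fderiv one_ne_zero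
  -- the line maps and their derivatives
  have hline : ∀ (s : ℝ) (a b : EuclideanSpace ℝ (Fin n)),
      HasDerivAt (fun s : ℝ => a + s • b) b s := fun s a b => by
    simpa using ((hasDerivAt_id s).smul_const b).const_add a
  -- the s-derivative of the integrand
  set F' : ℝ → ℝ → ℝ := fun s t =>
    (1 / 2 : ℝ) * (⟪l t + s • δl t, δl t⟫ + ⟪δl t, l t + s • δl t⟫) -
      (⟪deriv l t + s • deriv δl t, deriv δq t⟫ + ⟪deriv δl t, deriv q t + s • deriv δq t⟫) -
      (⟪l t + s • δl t, (fderiv ℝ f (q t + s • δq t)) (δq t)⟫ + ⟪δl t, f (q t + s • δq t)⟫) -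
      (⟪l t + s • δl t, δl t⟫ + ⟪δl t, l t + s • δl t⟫) with hF'def
  have hFd : ∀ (s t : ℝ),
      HasDerivAt (fun s : ℝ =>
        (1 / 2 : ℝ) * ‖l t + s • δl t‖ ^ 2 -
          ⟪deriv l t + s • deriv δl t, deriv q t + s • deriv δq t⟫ -
          ⟪l t + s • δl t, f (q t + s • δq t)⟫ -
          ⟪l t + s • δl t, l t + s • δl t⟫) (F' s t) s := by
    intro s t
    have h1 := ((hline s (l t) (δl t)).inner ℝ (hline s (l t) (δl t))).const_mul (1 / 2 : ℝ)
    have h2 := (hline s (deriv l t) (deriv δl t)).inner ℝ (hline s (deriv q t) (deriv δq t))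
    have hfc : HasDerivAt (fun s : ℝ => f (q t + s • δq t))
        ((fderiv ℝ f (q t + s • δq t)) (δq t)) s :=
      (hfd (q t + s • δq t)).hasFDerivAt.comp_hasDerivAt s (hline s (q t) (δq t))
    have h3 := (hline s (l t) (δl t)).inner ℝ hfc
    have h4 := (hline s (l t) (δl t)).inner ℝ (hline s (l t) (δl t))
    have h5 := ((h1.sub h2).sub h3).sub h4
    have hfe : (fun s : ℝ =>
        (1 / 2 : ℝ) * ‖l t + s • δl t‖ ^ 2 -
          ⟪deriv l t + s • deriv δl t, deriv q t + s • deriv δq t⟫ -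
          ⟪l t + s • δl t, f (q t + s • δq t)⟫ -
          ⟪l t + s • δl t, l t + s • δl t⟫) =
        (fun s : ℝ =>
        (1 / 2 : ℝ) * ⟪l t + s • δl t, l t + s • δl t⟫ -
          ⟪deriv l t + s • deriv δl t, deriv q t + s • deriv δq t⟫ -
          ⟪l t + s • δl t, f (q t + s • δq t)⟫ -
          ⟪l t + s • δl t, l t + s • δl t⟫) := by
      funext s
      simp only [real_inner_self_eq_norm_sq]
    rw [hfe, hF'def]
    exact h5
  -- joint continuity
  have hc1 : Continuous fun p : ℝ × ℝ => l p.2 + p.1 • δl p.2 :=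
    (hld.continuous.comp continuous_snd).add
      (continuous_fst.smul (hδld.continuous.comp continuous_snd))
  have hc2 : Continuous fun p : ℝ × ℝ => deriv l p.2 + p.1 • deriv δl p.2 :=
    (hl'd.continuous.comp continuous_snd).add
      (continuous_fst.smul (hδl'd.continuous.comp continuous_snd))
  have hc3 : Continuous fun p : ℝ × ℝ => deriv q p.2 + p.1 • deriv δq p.2 :=
    (hq'd.continuous.comp continuous_snd).add
      (continuous_fst.smul (hδq'd.continuous.comp continuous_snd))
  have hc4 : Continuous fun p : ℝ × ℝ => q p.2 + p.1 • δq p.2 :=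
    (hqd.continuous.comp continuous_snd).add
      (continuous_fst.smul (hδqd.continuous.comp continuous_snd))
  have hcδl : Continuous fun p : ℝ × ℝ => δl p.2 := hδld.continuous.comp continuous_snd
  have hcδq' : Continuous fun p : ℝ × ℝ => deriv δq p.2 := hδq'd.continuous.comp continuous_snd
  have hcδl' : Continuous fun p : ℝ × ℝ => deriv δl p.2 := hδl'd.continuous.comp continuous_snd
  have hcδq : Continuous fun p : ℝ × ℝ => δq p.2 := hδqd.continuous.comp continuous_snd
  have hcf : Continuous fun p : ℝ × ℝ => f (q p.2 + p.1 • δq p.2) :=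
    hf.continuous.comp hc4
  have hcDf : Continuous fun p : ℝ × ℝ => (fderiv ℝ f (q p.2 + p.1 • δq p.2)) (δq p.2) :=
    (hDfc.comp hc4).clm_apply hcδq
  have hF'c : Continuous fun p : ℝ × ℝ => F' p.1 p.2 := by
    rw [hF'def]
    exact (((continuous_const.mul ((hc1.inner hcδl).add (hcδl.inner hc1))).sub
      ((hc2.inner hcδq').add (hcδl'.inner hc3))).sub
      ((hc1.inner hcDf).add (hcδl.inner hcf))).sub
      ((hc1.inner hcδl).add (hcδl.inner hc1))
  have hFc : Continuous fun p : ℝ × ℝ =>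
      (1 / 2 : ℝ) * ‖l p.2 + p.1 • δl p.2‖ ^ 2 -
        ⟪deriv l p.2 + p.1 • deriv δl p.2, deriv q p.2 + p.1 • deriv δq p.2⟫ -
        ⟪l p.2 + p.1 • δl p.2, f (q p.2 + p.1 • δq p.2)⟫ -
        ⟪l p.2 + p.1 • δl p.2, l p.2 + p.1 • δl p.2⟫ := by
    exact (((continuous_const.mul ((hc1.norm).pow 2)).sub (hc2.inner hc3)).sub
      (hc1.inner hcf)).sub (hc1.inner hc1)
  -- bound on the derivative
  have hK : IsCompact (Set.Icc (-1 : ℝ) 1 ×ˢ Set.uIcc (0 : ℝ) T) :=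
    isCompact_Icc.prod isCompact_uIcc
  obtain ⟨C, hC⟩ := hK.exists_bound_of_continuousOn hF'c.continuousOn
  -- differentiate under the integral sign
  have hmain := intervalIntegral.hasDerivAt_integral_of_dominated_loc_of_deriv_le
    (μ := MeasureTheory.volume) (a := (0 : ℝ)) (b := T) (x₀ := (0 : ℝ))
    (F := fun s t =>
      (1 / 2 : ℝ) * ‖l t + s • δl t‖ ^ 2 -
        ⟪deriv l t + s • deriv δl t, deriv q t + s • deriv δq t⟫ -
        ⟪l t + s • δl t, f (q t + s • δq t)⟫ -
        ⟪l t + s • δl t, l t + s • δl t⟫)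
    (F' := F') (bound := fun _ => C) (s := Metric.ball 0 1) (Metric.ball_mem_nhds 0 one_pos)
    (Filter.Eventually.of_forall fun s =>
      ((hFc.comp (continuous_const.prodMk continuous_id)).aestronglyMeasurable).restrict)
    ((hFc.comp (continuous_const.prodMk continuous_id)).intervalIntegrable 0 T)
    (((hF'c.comp (continuous_const.prodMk continuous_id)).aestronglyMeasurable).restrict)
    (Filter.Eventually.of_forall fun t ht x hx => by
      have hx1 : |x| < 1 := by simpa [Real.norm_eq_abs] using mem_ball_zero_iff.mp hx
      exact hC (x, t) ⟨Set.mem_Icc.mpr (abs_le.mp hx1.le), Set.uIoc_subset_uIcc ht⟩)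
    intervalIntegrable_const
    (Filter.Eventually.of_forall fun t ht x hx => hFd x t)
  -- FTC for the integral of F' 0
  set h : ℝ → ℝ := fun t => ⟪δl t, deriv q t⟫ + ⟪deriv l t, δq t⟫ with hhdef
  have hhd : ∀ t ∈ Set.uIcc (0 : ℝ) T, HasDerivAt h (-(F' 0 t)) t := by
    intro t ht
    rw [Set.uIcc_of_le hT.le] at ht
    have h1 : HasDerivAt h
        ((⟪δl t, deriv (deriv q) t⟫ + ⟪deriv δl t, deriv q t⟫) +
          (⟪deriv l t, deriv δq t⟫ + ⟪deriv (deriv l) t, δq t⟫)) t :=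
      ((hδld t).hasDerivAt.inner ℝ (hq'd t).hasDerivAt).add
        ((hl'd t).hasDerivAt.inner ℝ (hδqd t).hasDerivAt)
    convert h1 using 1
    rw [heq1 t ht, heq2 t ht]
    simp only [hF'def, zero_smul, add_zero, ContinuousLinearMap.adjoint_inner_left,
      inner_add_right, inner_zero_right]
    rw [real_inner_comm (δl t) (l t)]
    ring
  have hint1 : (∫ t in (0 : ℝ)..T, -(F' 0 t)) = h T - h 0 :=
    intervalIntegral.integral_eq_sub_of_hasDerivAt hhd
      (((hF'c.comp (continuous_const.prodMk continuous_id)).neg).intervalIntegrable 0 T)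
  have hint2 : (∫ t in (0 : ℝ)..T, F' 0 t) = h 0 - h T := by
    rw [intervalIntegral.integral_neg] at hint1
    linarith
  -- derivative of the boundary terms
  have hφd : HasDerivAt (fun s : ℝ => φ (q T + s • δq T) (deriv q T + s • deriv δq T))
      ((fderiv ℝ (Function.uncurry φ) (q T, deriv q T)) (δq T, deriv δq T)) 0 := by
    have hp : HasDerivAt
        (fun s : ℝ => (q T + s • δq T, deriv q T + s • deriv δq T))
        ((δq T, deriv δq T)) 0 :=
      (hline 0 (q T) (δq T)).prodMk (hline 0 (deriv q T) (deriv δq T))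
    have hcomp := ((hφ.differentiable one_ne_zero)
      (q T + (0 : ℝ) • δq T, deriv q T + (0 : ℝ) • deriv δq T)).hasFDerivAt.comp_hasDerivAt 0 hp
    simpa [Function.comp_def] using hcomp
  have hB2 : HasDerivAt (fun s : ℝ => ⟪l T + s • δl T, deriv q T + s • deriv δq T⟫)
      (⟪l T + (0 : ℝ) • δl T, deriv δq T⟫ + ⟪δl T, deriv q T + (0 : ℝ) • deriv δq T⟫) 0 :=
    (hline 0 (l T) (δl T)).inner ℝ (hline 0 (deriv q T) (deriv δq T))
  have hB3 : HasDerivAt (fun s : ℝ => ⟪l 0 + s • δl 0, deriv q 0⟫)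
      (⟪l 0 + (0 : ℝ) • δl 0, (0 : EuclideanSpace ℝ (Fin n))⟫ + ⟪δl 0, deriv q 0⟫) 0 :=
    (hline 0 (l 0) (δl 0)).inner ℝ (hasDerivAt_const 0 (deriv q 0))
  have htot := ((hφd.add hB2).sub hB3).add hmain.2
  refine htot.deriv.trans ?_
  -- now show the value is zero
  have hgrad1 : (fderiv ℝ (Function.uncurry φ) (q T, deriv q T)) (δq T, (0 : EuclideanSpace ℝ (Fin n)))
      = ⟪deriv l T, δq T⟫ := by
    have h1 : HasFDerivAt (fun x => φ x (deriv q T))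
        ((fderiv ℝ (Function.uncurry φ) (q T, deriv q T)).comp
          ((ContinuousLinearMap.id ℝ (EuclideanSpace ℝ (Fin n))).prod 0)) (q T) :=
      ((hφ.differentiable one_ne_zero) (q T, deriv q T)).hasFDerivAt.comp (f := fun x => (x, deriv q T)) (q T)
        ((hasFDerivAt_id (q T)).prodMk (hasFDerivAt_const (deriv q T) (q T)))
    rw [hbdq, aux_inner_gradient, h1.fderiv]
    simp
  have hgrad2 : (fderiv ℝ (Function.uncurry φ) (q T, deriv q T)) ((0 : EuclideanSpace ℝ (Fin n)), deriv δq T)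
      = -⟪l T, deriv δq T⟫ := by
    have h1 : HasFDerivAt (fun x => φ (q T) x)
        ((fderiv ℝ (Function.uncurry φ) (q T, deriv q T)).comp
          ((0 : EuclideanSpace ℝ (Fin n) →L[ℝ] EuclideanSpace ℝ (Fin n)).prod
            (ContinuousLinearMap.id ℝ (EuclideanSpace ℝ (Fin n))))) (deriv q T) :=
      ((hφ.differentiable one_ne_zero) (q T, deriv q T)).hasFDerivAt.comp (deriv q T)
        ((hasFDerivAt_const (q T) (deriv q T)).prodMk (hasFDerivAt_id (deriv q T)))
    have h2 : gradient (fun x => φ (q T) x) (deriv q T) = -(l T) := by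
      rw [hbdv]; simp
    have h3 : ⟪gradient (fun x => φ (q T) x) (deriv q T), deriv δq T⟫ = -⟪l T, deriv δq T⟫ := by
      rw [h2, inner_neg_left]
    rw [← h3, aux_inner_gradient, h1.fderiv]
    simp
  have hsplit : (fderiv ℝ (Function.uncurry φ) (q T, deriv q T)) (δq T, deriv δq T)
      = ⟪deriv l T, δq T⟫ - ⟪l T, deriv δq T⟫ := by
    have : ((δq T, deriv δq T) : EuclideanSpace ℝ (Fin n) × EuclideanSpace ℝ (Fin n))
        = (δq T, (0 : EuclideanSpace ℝ (Fin n))) + ((0 : EuclideanSpace ℝ (Fin n)), deriv δq T) := by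
      simp [Prod.ext_iff]
    rw [this, map_add, hgrad1, hgrad2]
    ring
  rw [hint2, hsplit, hhdef]
  simp only [zero_smul, add_zero, hδq0, hδqdot0, inner_zero_right]
  ring
end

section
/- Let g be an invertible n×n real matrix such that f(g q) = g f(q) for all q ∈ ℝⁿ. Then the invariance L̃(g q, (g⁻¹)ᵀ λ, g v, (g⁻¹)ᵀ w) = L̃(q, λ, v, w) holds for all (q, λ, v, w) ∈ (ℝⁿ)⁴ if and only if g is orthogonal, i.e. gᵀ g = I. -/
open scoped RealInnerProductSpace

open Matrix

private lemma inner_euclid {n : ℕ} (x y : EuclideanSpace ℝ (Fin n)) :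
    ⟪x, y⟫ = (x : Fin n → ℝ) ⬝ᵥ (y : Fin n → ℝ) := by
  simp [PiLp.inner_apply, dotProduct, RCLike.inner_apply, mul_comm]

private lemma mulVec_dot {n : ℕ} (A B : Matrix (Fin n) (Fin n) ℝ) (x y : Fin n → ℝ) :
    (A.mulVec x) ⬝ᵥ (B.mulVec y) = x ⬝ᵥ ((Aᵀ * B).mulVec y) := by
  rw [Matrix.dotProduct_mulVec, ← Matrix.vecMul_transpose, Matrix.vecMul_vecMul,
    Matrix.dotProduct_mulVec]

private lemma eq_one_of_dot {n : ℕ} (M : Matrix (Fin n) (Fin n) ℝ)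
    (h : ∀ x y : Fin n → ℝ, x ⬝ᵥ M.mulVec y = x ⬝ᵥ y) : M = 1 := by
  ext i j
  have := h (Pi.single i 1) (Pi.single j 1)
  simpa [single_dotProduct, Matrix.mulVec_single, Matrix.one_apply,
    Pi.single_apply, eq_comm] using this

private lemma polarize {n : ℕ} (M : Matrix (Fin n) (Fin n) ℝ) (hM : Mᵀ = M)
    (h : ∀ x : Fin n → ℝ, x ⬝ᵥ M.mulVec x = x ⬝ᵥ x) :
    ∀ x y : Fin n → ℝ, x ⬝ᵥ M.mulVec y = x ⬝ᵥ y := by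
  intro x y
  have hsym : y ⬝ᵥ M.mulVec x = x ⬝ᵥ M.mulVec y := by
    rw [Matrix.dotProduct_mulVec, ← Matrix.mulVec_transpose, hM, dotProduct_comm]
  have hxy := h (x + y)
  have hx := h x
  have hy := h y
  simp only [Matrix.mulVec_add, add_dotProduct, dotProduct_add] at hxy
  have hc : y ⬝ᵥ x = x ⬝ᵥ y := dotProduct_comm y x
  linarith


/-- For an invertible matrix `g` with `f(g q) = g f(q)`, the new Lagrangian
`L̃(q, λ, v, w) = -⟨w, v⟩ - ⟨λ, f q⟩ - ½‖λ‖²` is invariant under the lifted action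
`(q, λ, v, w) ↦ (g q, (g⁻¹)ᵀ λ, g v, (g⁻¹)ᵀ w)` iff `g` is orthogonal (`gᵀ g = 1`). -/
theorem newLagrangian_invariant_iff_orthogonal (n : ℕ)
    (f : EuclideanSpace ℝ (Fin n) → EuclideanSpace ℝ (Fin n)) (hf : ContDiff ℝ 1 f)
    (Lt : EuclideanSpace ℝ (Fin n) → EuclideanSpace ℝ (Fin n) → EuclideanSpace ℝ (Fin n) →
      EuclideanSpace ℝ (Fin n) → ℝ)
    (hLt : ∀ q l v w, Lt q l v w = -⟪w, v⟫ - ⟪l, f q⟫ - (1 / 2 : ℝ) * ‖l‖ ^ 2)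
    (g : Matrix (Fin n) (Fin n) ℝ) (hg : IsUnit g)
    (hequiv : ∀ q : EuclideanSpace ℝ (Fin n), f (WithLp.toLp 2 (g.mulVec q)) = WithLp.toLp 2 (g.mulVec (f q))) :
    (∀ q l v w : EuclideanSpace ℝ (Fin n),
      Lt (WithLp.toLp 2 (g.mulVec q)) (WithLp.toLp 2 ((g⁻¹).transpose.mulVec l))
        (WithLp.toLp 2 (g.mulVec v)) (WithLp.toLp 2 ((g⁻¹).transpose.mulVec w))
        = Lt q l v w)
    ↔ g.transpose * g = 1 := by
  have hgd : IsUnit g.det := (Matrix.isUnit_iff_isUnit_det g).mp hg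
  have hginv : g⁻¹ * g = 1 := Matrix.nonsing_inv_mul g hgd
  have hnorm : ∀ l : EuclideanSpace ℝ (Fin n), ‖l‖ ^ 2 = (l : Fin n → ℝ) ⬝ᵥ l := by
    intro l
    rw [← real_inner_self_eq_norm_sq, inner_euclid]
  constructor
  · intro h
    -- extract the norm condition with v = w = 0
    have key : ∀ l : EuclideanSpace ℝ (Fin n),
        (l : Fin n → ℝ) ⬝ᵥ ((g⁻¹ * (g⁻¹)ᵀ).mulVec l) = l ⬝ᵥ l := by
      intro l
      have := h l l 0 0
      rw [hLt, hLt] at this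
      simp only [hequiv, inner_euclid, hnorm, Matrix.mulVec_zero, zero_dotProduct,
        dotProduct_zero, WithLp.ofLp_toLp, WithLp.ofLp_zero, mulVec_dot, Matrix.transpose_transpose, hginv,
        Matrix.one_mulVec, neg_zero, zero_sub] at this
      linarith
    have hMsym : (g⁻¹ * (g⁻¹)ᵀ)ᵀ = g⁻¹ * (g⁻¹)ᵀ := by
      rw [Matrix.transpose_mul, Matrix.transpose_transpose]
    have hM1 : g⁻¹ * (g⁻¹)ᵀ = 1 :=
      eq_one_of_dot _ (polarize _ hMsym (fun x => key (WithLp.toLp 2 x)))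
    have hgeq : g = (g⁻¹)ᵀ := by
      have := Matrix.inv_eq_right_inv hM1
      rwa [Matrix.nonsing_inv_nonsing_inv g hgd] at this
    calc gᵀ * g = (g⁻¹)ᵀᵀ * g := by rw [← hgeq]
      _ = g⁻¹ * g := by rw [Matrix.transpose_transpose]
      _ = 1 := hginv
  · intro ho
    intro q l v w
    have hginv2 : g⁻¹ = gᵀ := Matrix.inv_eq_left_inv ho
    rw [hLt, hLt, hginv2, Matrix.transpose_transpose]
    simp only [hequiv, inner_euclid, hnorm, WithLp.ofLp_toLp, mulVec_dot, ho, Matrix.one_mulVec]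
end

section
/- Let L : ℝᵐ × ℝᵐ → ℝ be continuously differentiable and let (g_s)_{s ∈ ℝ} be a family of m×m real matrices that is differentiable in s with g_0 = I, and assume the invariance L(g_s y, g_s ẏ) = L(y, ẏ) for all s ∈ ℝ and (y, ẏ) ∈ ℝᵐ × ℝᵐ. If y : [0,T] → ℝᵐ is a C² curve such that t ↦ ∇_{ẏ} L(y(t), ẏ(t)) is differentiable and the Euler–Lagrange equation d/dt ∇_{ẏ} L(y, ẏ) = ∇_y L(y, ẏ) holds on [0,T], then the momentum map I(t) = ⟨ ∇_{ẏ} L(y(t), ẏ(t)), ξ y(t) ⟩, where ξ = (d/ds g_s)|_{s=0}, is constant on [0,T]. -/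
open scoped RealInnerProductSpace

/-- Noether's theorem for a one-parameter family of linear symmetries:
if `L(g_s y, g_s ẏ) = L(y, ẏ)` for a differentiable family of matrices `g_s` with
`g_0 = 1`, then along Euler–Lagrange solutions the momentum map
`I(t) = ⟨∇_ẏ L(y, ẏ), ξ y⟩`, `ξ = (d/ds g_s)|_{s=0}`, is constant. -/
theorem noether_theorem_linear_symmetry (m : ℕ) (T : ℝ) (hT : 0 < T)
    (L : EuclideanSpace ℝ (Fin m) → EuclideanSpace ℝ (Fin m) → ℝ)
    (hL : ContDiff ℝ 1 (Function.uncurry L))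
    (g : ℝ → Matrix (Fin m) (Fin m) ℝ)
    (hg0 : g 0 = 1)
    (hgdiff : ∀ i j : Fin m, Differentiable ℝ fun s => g s i j)
    (hinv : ∀ (s : ℝ) (y ydot : EuclideanSpace ℝ (Fin m)),
      L (WithLp.toLp 2 ((g s).mulVec y)) (WithLp.toLp 2 ((g s).mulVec ydot)) = L y ydot)
    (ξ : Matrix (Fin m) (Fin m) ℝ)
    (hξ : ∀ i j : Fin m, ξ i j = deriv (fun s => g s i j) 0)
    (y : ℝ → EuclideanSpace ℝ (Fin m)) (hy : ContDiff ℝ 2 y)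
    (hmom : Differentiable ℝ fun t => gradient (fun v => L (y t) v) (deriv y t))
    (hEL : ∀ t ∈ Set.Icc (0 : ℝ) T,
      deriv (fun τ => gradient (fun v => L (y τ) v) (deriv y τ)) t
        = gradient (fun x => L x (deriv y t)) (y t)) :
    ∀ t₁ ∈ Set.Icc (0 : ℝ) T, ∀ t₂ ∈ Set.Icc (0 : ℝ) T,
      @inner ℝ (EuclideanSpace ℝ (Fin m)) _
          (gradient (fun v => L (y t₁) v) (deriv y t₁)) (WithLp.toLp 2 (ξ.mulVec (y t₁)))
        = @inner ℝ (EuclideanSpace ℝ (Fin m)) _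
          (gradient (fun v => L (y t₂) v) (deriv y t₂)) (WithLp.toLp 2 (ξ.mulVec (y t₂))) := by
  classical
  set dy := deriv y with hdy
  have hLd : Differentiable ℝ (Function.uncurry L) := hL.differentiable one_ne_zero
  set e := PiLp.continuousLinearEquiv 2 ℝ (fun _ : Fin m => ℝ) with he
  -- derivative of s ↦ g s *ᵥ a at s = 0
  have hmv : ∀ a : EuclideanSpace ℝ (Fin m),
      HasDerivAt (F := EuclideanSpace ℝ (Fin m))
        (fun s => WithLp.toLp 2 ((g s).mulVec a)) (WithLp.toLp 2 (ξ.mulVec a)) 0 := by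
    intro a
    have h1 : HasDerivAt (F := Fin m → ℝ)
        (fun s => (g s).mulVec a) (ξ.mulVec a) 0 := by
      rw [hasDerivAt_pi]
      intro i
      simp only [Matrix.mulVec, dotProduct]
      refine HasDerivAt.fun_sum fun j _ => ?_
      have := ((hgdiff i j) 0).hasDerivAt.mul_const (a j)
      rw [hξ i j]; exact this
    exact e.symm.toContinuousLinearMap.hasFDerivAt.comp_hasDerivAt 0 h1
  -- Key invariance identity
  have key : ∀ a b : EuclideanSpace ℝ (Fin m),
      ⟪gradient (fun x => L x b) a, WithLp.toLp 2 (ξ.mulVec a)⟫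
        + ⟪gradient (fun v => L a v) b, WithLp.toLp 2 (ξ.mulVec b)⟫ = 0 := by
    intro a b
    set D := fderiv ℝ (Function.uncurry L) (a, b) with hDdef
    have hD : HasFDerivAt (Function.uncurry L) D (a, b) := (hLd (a, b)).hasFDerivAt
    have hx : HasFDerivAt (fun x => L x b)
        (D.comp (ContinuousLinearMap.inl ℝ _ _)) a := by
      have h : HasFDerivAt (fun x : EuclideanSpace ℝ (Fin m) => (x, b))
          (ContinuousLinearMap.inl ℝ _ _) a :=
        (hasFDerivAt_id a).prodMk (hasFDerivAt_const b a)
      exact hD.comp a h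
    have hv : HasFDerivAt (fun v => L a v)
        (D.comp (ContinuousLinearMap.inr ℝ _ _)) b := by
      have h : HasFDerivAt (fun v : EuclideanSpace ℝ (Fin m) => (a, v))
          (ContinuousLinearMap.inr ℝ _ _) b :=
        (hasFDerivAt_const a b).prodMk (hasFDerivAt_id b)
      exact hD.comp b h
    have gx : ∀ u : EuclideanSpace ℝ (Fin m),
        ⟪gradient (fun x => L x b) a, u⟫ = D (u, 0) := by
      intro u
      rw [gradient, InnerProductSpace.toDual_symm_apply, hx.fderiv]
      simp
    have gv : ∀ u : EuclideanSpace ℝ (Fin m),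
        ⟪gradient (fun v => L a v) b, u⟫ = D (0, u) := by
      intro u
      rw [gradient, InnerProductSpace.toDual_symm_apply, hv.fderiv]
      simp
    have hψ : HasDerivAt (F := EuclideanSpace ℝ (Fin m) × EuclideanSpace ℝ (Fin m))
        (fun s => (WithLp.toLp 2 ((g s).mulVec a), WithLp.toLp 2 ((g s).mulVec b)))
        (WithLp.toLp 2 (ξ.mulVec a), WithLp.toLp 2 (ξ.mulVec b)) 0 := (hmv a).prodMk (hmv b)
    have h0 : (((WithLp.toLp 2 ((g 0).mulVec a) : EuclideanSpace ℝ (Fin m)),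
        (WithLp.toLp 2 ((g 0).mulVec b) : EuclideanSpace ℝ (Fin m))) :
          EuclideanSpace ℝ (Fin m) × EuclideanSpace ℝ (Fin m)) = (a, b) := by
      rw [hg0]; simp [Matrix.one_mulVec]
    have hD' : HasFDerivAt (Function.uncurry L) D
        (((WithLp.toLp 2 ((g 0).mulVec a) : EuclideanSpace ℝ (Fin m)),
        (WithLp.toLp 2 ((g 0).mulVec b) : EuclideanSpace ℝ (Fin m)))) := by rw [h0]; exact hD
    have hφ : HasDerivAt (fun s => L (WithLp.toLp 2 ((g s).mulVec a)) (WithLp.toLp 2 ((g s).mulVec b)))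
        (D (WithLp.toLp 2 (ξ.mulVec a), WithLp.toLp 2 (ξ.mulVec b))) 0 := by have := hD'.comp_hasDerivAt 0 hψ; exact this
    have hconst : (fun s => L (WithLp.toLp 2 ((g s).mulVec a)) (WithLp.toLp 2 ((g s).mulVec b))) = fun _ => L a b :=
      funext fun s => hinv s a b
    rw [hconst] at hφ
    have hzero : D (WithLp.toLp 2 (ξ.mulVec a), WithLp.toLp 2 (ξ.mulVec b)) = 0 :=
      hφ.unique (hasDerivAt_const 0 (L a b))
    rw [gx, gv, ← map_add, Prod.mk_add_mk, add_zero, zero_add, hzero]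
  -- time derivative of the momentum map
  intro t₁ h₁ t₂ h₂
  set p := fun t => gradient (fun v => L (y t) v) (dy t) with hp
  have hyd : Differentiable ℝ y := hy.differentiable (by norm_num)
  have hq : ∀ t : ℝ, HasDerivAt (F := EuclideanSpace ℝ (Fin m))
      (fun τ => WithLp.toLp 2 (ξ.mulVec (y τ))) (WithLp.toLp 2 (ξ.mulVec (dy t))) t := by
    intro t
    have h1 : HasDerivAt (F := Fin m → ℝ)
        (fun τ => ξ.mulVec (y τ)) (ξ.mulVec (e (dy t))) t := by
      rw [hasDerivAt_pi]
      intro i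
      simp only [Matrix.mulVec, dotProduct]
      refine HasDerivAt.fun_sum fun j _ => ?_
      have hyj : HasDerivAt (fun τ => y τ j) (dy t j) t :=
        hasDerivAt_pi.1
          (e.toContinuousLinearMap.hasFDerivAt.comp_hasDerivAt t (hyd t).hasDerivAt) j
      exact hyj.const_mul (ξ i j)
    exact e.symm.toContinuousLinearMap.hasFDerivAt.comp_hasDerivAt t h1
  have hI : ∀ t : ℝ, HasDerivAt (fun τ => (⟪p τ, WithLp.toLp 2 (ξ.mulVec (y τ))⟫ : ℝ))
      (⟪p t, WithLp.toLp 2 (ξ.mulVec (dy t))⟫ + ⟪deriv p t, WithLp.toLp 2 (ξ.mulVec (y t))⟫) t := by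
    intro t
    exact HasDerivAt.inner ℝ (hmom t).hasDerivAt (hq t)
  have hIderiv : ∀ t ∈ Set.Icc (0 : ℝ) T,
      deriv (fun τ => (⟪p τ, WithLp.toLp 2 (ξ.mulVec (y τ))⟫ : ℝ)) t = 0 := by
    intro t ht
    rw [(hI t).deriv]
    have hELt : deriv p t = gradient (fun x => L x (dy t)) (y t) := hEL t ht
    rw [hELt]
    simp only [hp]
    have hk := key (y t) (dy t)
    linarith [hk]
  -- constancy
  have hconst : ∀ t ∈ Set.Icc (0 : ℝ) T,
      (⟪p t, WithLp.toLp 2 (ξ.mulVec (y t))⟫ : ℝ) = ⟪p 0, WithLp.toLp 2 (ξ.mulVec (y 0))⟫ := by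
    refine constant_of_derivWithin_zero ?_ ?_
    · exact fun x _ => ((hI x).differentiableAt).differentiableWithinAt
    · intro x hx
      rw [((hI x).differentiableAt).derivWithin (uniqueDiffOn_Icc hT x (Set.mem_Icc_of_Ico hx))]
      exact hIderiv x (Set.mem_Icc_of_Ico hx)
  rw [hconst t₁ h₁, hconst t₂ h₂]
end

section
/- Let n ∈ ℝ³ with ‖n‖ = 1 and let f : ℝ³ → ℝ³ be differentiable and satisfy the infinitesimal equivariance Df(q)(n × q) = n × f(q) for all q ∈ ℝ³. If q, λ : [0,T] → ℝ³ are C² curves with q̈ = f(q) + λ and λ̈ = (Df(q))ᵀ λ on [0,T], then the quantity t ↦ ⟨n, q̇(t) × λ(t) + λ̇(t) × q(t)⟩ is constant on [0,T]. -/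
open scoped RealInnerProductSpace

noncomputable def crossLin (x : EuclideanSpace ℝ (Fin 3)) :
    EuclideanSpace ℝ (Fin 3) →ₗ[ℝ] EuclideanSpace ℝ (Fin 3) where
  toFun y := WithLp.toLp 2 (crossProduct (WithLp.ofLp x) (WithLp.ofLp y))
  map_add' y z := by simp
  map_smul' c y := by simp

noncomputable def crossCLM :
    EuclideanSpace ℝ (Fin 3) →L[ℝ] EuclideanSpace ℝ (Fin 3) →L[ℝ] EuclideanSpace ℝ (Fin 3) :=
  LinearMap.toContinuousLinearMap
  { toFun := fun x => LinearMap.toContinuousLinearMap (crossLin x)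
    map_add' := fun x y => by
      ext v
      simp [crossLin, LinearMap.map_add]
    map_smul' := fun c x => by
      ext v
      simp [crossLin] }

@[simp] lemma crossCLM_apply (x y : EuclideanSpace ℝ (Fin 3)) :
    crossCLM x y = WithLp.toLp 2 (crossProduct (WithLp.ofLp x) (WithLp.ofLp y)) := rfl

lemma inner_dot (a b : EuclideanSpace ℝ (Fin 3)) :
    ⟪a, b⟫ = dotProduct (WithLp.ofLp a) (WithLp.ofLp b) := by
  simp [PiLp.inner_apply, dotProduct, RCLike.inner_apply, mul_comm]

lemma triple_perm (a b c : EuclideanSpace ℝ (Fin 3)) :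
    ⟪a, WithLp.toLp 2 (crossProduct (WithLp.ofLp b) (WithLp.ofLp c))⟫
      = ⟪b, WithLp.toLp 2 (crossProduct (WithLp.ofLp c) (WithLp.ofLp a))⟫ := by
  rw [inner_dot, inner_dot, WithLp.ofLp_toLp, WithLp.ofLp_toLp]
  exact triple_product_permutation a b c

/-- For `f` infinitesimally equivariant under rotations about a unit vector
`n` (`Df(q)(n × q) = n × f(q)`), the quantity `⟨n, q̇ × λ + λ̇ × q⟩` is conserved along
solutions of `q̈ = f(q) + λ`, `λ̈ = (Df(q))ᵀ λ`. -/
theorem conserved_quantity_rotational_symmetry_lagrangian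
    (T : ℝ) (hT : 0 < T)
    (nv : EuclideanSpace ℝ (Fin 3)) (hn : ‖nv‖ = 1)
    (f : EuclideanSpace ℝ (Fin 3) → EuclideanSpace ℝ (Fin 3)) (hf : Differentiable ℝ f)
    (hequiv : ∀ q : EuclideanSpace ℝ (Fin 3),
      fderiv ℝ f q (WithLp.toLp 2 (crossProduct nv q)) = WithLp.toLp 2 (crossProduct nv (f q)))
    (q l : ℝ → EuclideanSpace ℝ (Fin 3))
    (hq : ContDiff ℝ 2 q) (hl : ContDiff ℝ 2 l)
    (heq1 : ∀ t ∈ Set.Icc (0 : ℝ) T, deriv (deriv q) t = f (q t) + l t)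
    (heq2 : ∀ t ∈ Set.Icc (0 : ℝ) T,
      deriv (deriv l) t = (fderiv ℝ f (q t)).adjoint (l t)) :
    ∀ t₁ ∈ Set.Icc (0 : ℝ) T, ∀ t₂ ∈ Set.Icc (0 : ℝ) T,
      @inner ℝ (EuclideanSpace ℝ (Fin 3)) _ nv
          (WithLp.toLp 2 (crossProduct (WithLp.ofLp (deriv q t₁)) (l t₁) + crossProduct (WithLp.ofLp (deriv l t₁)) (q t₁)))
        = @inner ℝ (EuclideanSpace ℝ (Fin 3)) _ nv
          (WithLp.toLp 2 (crossProduct (WithLp.ofLp (deriv q t₂)) (l t₂) + crossProduct (WithLp.ofLp (deriv l t₂)) (q t₂))) := by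
  -- differentiability facts
  have hq' : ContDiff ℝ (1 + 1) q := by norm_num; exact hq
  have hl' : ContDiff ℝ (1 + 1) l := by norm_num; exact hl
  have hdq : ContDiff ℝ 1 (deriv q) := (contDiff_succ_iff_deriv.mp hq').2.2
  have hdl : ContDiff ℝ 1 (deriv l) := (contDiff_succ_iff_deriv.mp hl').2.2
  set F : ℝ → ℝ := fun t => ⟪nv,
    crossCLM (deriv q t) (l t) + crossCLM (deriv l t) (q t)⟫ with hF
  set G : ℝ → ℝ := fun t => ⟪nv,
    (crossCLM (deriv (deriv q) t) (l t) + crossCLM (deriv q t) (deriv l t))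
    + (crossCLM (deriv (deriv l) t) (q t) + crossCLM (deriv l t) (deriv q t))⟫ with hG
  have cross_deriv : ∀ (u v : ℝ → EuclideanSpace ℝ (Fin 3)) (u' v' : EuclideanSpace ℝ (Fin 3))
      (t : ℝ), HasDerivAt u u' t → HasDerivAt v v' t →
      HasDerivAt (fun s => crossCLM (u s) (v s)) (crossCLM u' (v t) + crossCLM (u t) v') t := by
    intro u v u' v' t hu hv
    exact (crossCLM.hasFDerivAt.comp_hasDerivAt t hu).clm_apply hv
  have hderivF : ∀ t : ℝ, HasDerivAt F (G t) t := by
    intro t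
    have h1 : HasDerivAt (deriv q) (deriv (deriv q) t) t :=
      (hdq.differentiable one_ne_zero t).hasDerivAt
    have h2 : HasDerivAt (deriv l) (deriv (deriv l) t) t :=
      (hdl.differentiable one_ne_zero t).hasDerivAt
    have h3 : HasDerivAt q (deriv q t) t :=
      (hq.differentiable (by norm_num) t).hasDerivAt
    have h4 : HasDerivAt l (deriv l t) t :=
      (hl.differentiable (by norm_num) t).hasDerivAt
    have hX := cross_deriv _ _ _ _ t h1 h4
    have hY := cross_deriv _ _ _ _ t h2 h3
    have := (hasDerivAt_const t nv).inner ℝ (hX.add hY)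
    simpa [hF, hG] using this
  have hG0 : ∀ t ∈ Set.Icc (0 : ℝ) T, G t = 0 := by
    intro t ht
    have e1 := heq1 t ht
    have e2 := heq2 t ht
    rw [hG]
    simp only [e1, e2, crossCLM_apply]
    set a := f (q t)
    set lam := l t
    set qq := q t
    set u := deriv q t
    set v := deriv l t
    set A := fderiv ℝ f (q t)
    have c1 : (crossProduct (WithLp.ofLp (a + lam))) (WithLp.ofLp lam)
        = crossProduct (WithLp.ofLp a) (WithLp.ofLp lam) := by
      simp [cross_self]
    have c2 : ⟪nv, WithLp.toLp 2 (crossProduct (WithLp.ofLp u) (WithLp.ofLp v))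
        + WithLp.toLp 2 (crossProduct (WithLp.ofLp v) (WithLp.ofLp u))⟫ = (0 : ℝ) := by
      rw [← WithLp.toLp_add, cross_anticomm']
      simp
    have c3 : ⟪nv, WithLp.toLp 2 (crossProduct (WithLp.ofLp (A.adjoint lam)) (WithLp.ofLp qq))⟫
        = -⟪nv, WithLp.toLp 2 (crossProduct (WithLp.ofLp a) (WithLp.ofLp lam))⟫ := by
      rw [triple_perm nv (A.adjoint lam) qq]
      rw [ContinuousLinearMap.adjoint_inner_left]
      have hq2 : WithLp.toLp 2 (crossProduct (WithLp.ofLp qq) (WithLp.ofLp nv))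
          = -(WithLp.toLp 2 (crossProduct (WithLp.ofLp nv) (WithLp.ofLp qq))) := by
        rw [← WithLp.toLp_neg, cross_anticomm]
      rw [hq2, map_neg, hequiv]
      rw [inner_neg_right]
      congr 1
      rw [triple_perm nv a lam]
      rw [triple_perm a lam nv]
    calc ⟪nv, (WithLp.toLp 2 (crossProduct (WithLp.ofLp (a + lam)) (WithLp.ofLp lam))
            + WithLp.toLp 2 (crossProduct (WithLp.ofLp u) (WithLp.ofLp v)))
            + (WithLp.toLp 2 (crossProduct (WithLp.ofLp (A.adjoint lam)) (WithLp.ofLp qq))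
            + WithLp.toLp 2 (crossProduct (WithLp.ofLp v) (WithLp.ofLp u)))⟫
        = ⟪nv, WithLp.toLp 2 (crossProduct (WithLp.ofLp a) (WithLp.ofLp lam))⟫
            + (⟪nv, WithLp.toLp 2 (crossProduct (WithLp.ofLp u) (WithLp.ofLp v))
            + WithLp.toLp 2 (crossProduct (WithLp.ofLp v) (WithLp.ofLp u))⟫)
            + ⟪nv, WithLp.toLp 2 (crossProduct (WithLp.ofLp (A.adjoint lam)) (WithLp.ofLp qq))⟫ := by
          rw [c1]
          simp only [inner_add_right]
          ring
      _ = 0 := by rw [c2, c3]; ring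
  have hdiff : Differentiable ℝ F := fun t => (hderivF t).differentiableAt
  have hcont : ContinuousOn F (Set.Icc 0 T) := hdiff.continuous.continuousOn
  have hkey := constant_of_has_deriv_right_zero hcont (fun x hx => by
    have := (hderivF x).hasDerivWithinAt (s := Set.Ici x)
    rwa [hG0 x (Set.Ico_subset_Icc_self hx)] at this)
  intro t₁ ht₁ t₂ ht₂
  have key := (hkey t₁ ht₁).trans (hkey t₂ ht₂).symm
  simp only [hF, crossCLM_apply] at key
  simp only [WithLp.toLp_add]
  exact key
end

section
/- Let n ∈ ℝ³ be a unit vector and let n̂ be the skew-symmetric matrix with n̂ x = n × x for all x ∈ ℝ³, i.e. n̂ has rows (0, -n₃, n₂), (n₃, 0, -n₁), (-n₂, n₁, 0). Then for every s ∈ ℝ, Rodrigues' rotation formula holds for the matrix exponential: exp(s n̂) = I₃ + sin(s) · n̂ + (1 - cos(s)) · n̂². -/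
open scoped Nat


/-- Rodrigues' rotation formula: for a unit vector `n ∈ ℝ³` with associated
skew matrix `n̂` (`n̂ x = n × x`, explicitly given below),
`exp(s n̂) = I₃ + sin(s) n̂ + (1 - cos(s)) n̂²` for every `s ∈ ℝ`. -/
theorem rodrigues_rotation_formula
    (nv : EuclideanSpace ℝ (Fin 3)) (hn : ‖nv‖ = 1)
    (nhat : Matrix (Fin 3) (Fin 3) ℝ)
    (hcross : ∀ x : EuclideanSpace ℝ (Fin 3), nhat.mulVec x = crossProduct nv x)
    (hmat : nhat = !![0, -nv 2, nv 1; nv 2, 0, -nv 0; -nv 1, nv 0, 0]) :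
    ∀ s : ℝ,
      NormedSpace.exp (s • nhat)
        = 1 + Real.sin s • nhat + (1 - Real.cos s) • (nhat * nhat) := by
  intro s
  have hnorm : nv 0 ^ 2 + nv 1 ^ 2 + nv 2 ^ 2 = 1 := by
    have h := hn
    rw [EuclideanSpace.norm_eq, Real.sqrt_eq_one] at h
    simpa [Fin.sum_univ_three, Real.norm_eq_abs, sq_abs] using h
  have hcube : nhat * nhat * nhat = -nhat := by
    subst hmat
    ext i j
    fin_cases i <;> fin_cases j <;>
      simp [Matrix.mul_apply, Fin.sum_univ_three] <;>
      first
        | ring1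
        | linear_combination nv 0 * hnorm
        | linear_combination (-(nv 0)) * hnorm
        | linear_combination nv 1 * hnorm
        | linear_combination (-(nv 1)) * hnorm
        | linear_combination nv 2 * hnorm
        | linear_combination (-(nv 2)) * hnorm
  have hodd : ∀ m : ℕ, nhat ^ (2 * m + 1) = ((-1 : ℝ) ^ m) • nhat := by
    intro m
    induction m with
    | zero => simp
    | succ k ih =>
      have h1 : 2 * (k + 1) + 1 = (2 * k + 1) + 2 := by ring
      rw [h1, pow_add, ih, pow_two, smul_mul_assoc, ← mul_assoc, hcube, pow_succ, mul_smul,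
        neg_one_smul, smul_neg]
  have heven : ∀ m : ℕ, nhat ^ (2 * m + 2) = ((-1 : ℝ) ^ m) • (nhat * nhat) := by
    intro m
    induction m with
    | zero => simp [pow_two]
    | succ k ih =>
      have h1 : 2 * (k + 1) + 2 = (2 * k + 2) + 2 := by ring
      have h2 : nhat * nhat * (nhat * nhat) = -(nhat * nhat) := by
        rw [← mul_assoc, hcube, neg_mul]
      rw [h1, pow_add, ih, pow_two, smul_mul_assoc, h2, pow_succ, mul_smul, neg_one_smul,
        smul_neg]
  -- odd part of the series
  have hsin' : HasSum (fun k : ℕ => (((2 * k + 1)! : ℝ))⁻¹ • (s • nhat) ^ (2 * k + 1))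
      (Real.sin s • nhat) := by
    have h := (Real.hasSum_sin s).smul_const nhat
    have hfun : (fun k : ℕ => (((2 * k + 1)! : ℝ))⁻¹ • (s • nhat) ^ (2 * k + 1))
        = fun k : ℕ => ((-1 : ℝ) ^ k * s ^ (2 * k + 1) / (2 * k + 1)!) • nhat := by
      funext k
      rw [smul_pow, hodd k, smul_smul, smul_smul]
      congr 1
      ring
    rw [hfun]
    exact h
  -- even (shifted) part of the series
  have hcos1 : HasSum
      (fun k : ℕ => ((-1 : ℝ) ^ (k + 1) * s ^ (2 * (k + 1)) / (2 * (k + 1))!))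
      (Real.cos s - ∑ i ∈ Finset.range 1, (-1 : ℝ) ^ i * s ^ (2 * i) / (2 * i)!) :=
    (hasSum_nat_add_iff' (f := fun n : ℕ => ((-1 : ℝ) ^ n * s ^ (2 * n) / (2 * n)!)) 1).mpr
      (Real.hasSum_cos s)
  have hsum0 : (∑ i ∈ Finset.range 1, (-1 : ℝ) ^ i * s ^ (2 * i) / (2 * i)!) = 1 := by
    simp
  rw [hsum0] at hcos1
  have hcos2 : HasSum (fun k : ℕ => ((-1 : ℝ) ^ k * s ^ (2 * k + 2) / (2 * k + 2)!))
      (1 - Real.cos s) := by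
    have h := hcos1.neg
    rw [neg_sub] at h
    have hfun : (fun k : ℕ => ((-1 : ℝ) ^ k * s ^ (2 * k + 2) / (2 * k + 2)!))
        = fun k : ℕ => -((-1 : ℝ) ^ (k + 1) * s ^ (2 * (k + 1)) / (2 * (k + 1))!) := by
      funext k
      have e : 2 * (k + 1) = 2 * k + 2 := by ring
      rw [e, pow_succ]
      ring
    rw [hfun]
    exact h
  have hcos' : HasSum (fun k : ℕ => (((2 * k + 2)! : ℝ))⁻¹ • (s • nhat) ^ (2 * k + 2))
      ((1 - Real.cos s) • (nhat * nhat)) := by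
    have h := hcos2.smul_const (nhat * nhat)
    have hfun : (fun k : ℕ => (((2 * k + 2)! : ℝ))⁻¹ • (s • nhat) ^ (2 * k + 2))
        = fun k : ℕ => ((-1 : ℝ) ^ k * s ^ (2 * k + 2) / (2 * k + 2)!) • (nhat * nhat) := by
      funext k
      rw [smul_pow, heven k, smul_smul, smul_smul]
      congr 1
      ring
    rw [hfun]
    exact h
  have hshift : HasSum (fun n : ℕ => (((n + 1)! : ℝ))⁻¹ • (s • nhat) ^ (n + 1))
      (Real.sin s • nhat + (1 - Real.cos s) • (nhat * nhat)) :=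
    HasSum.even_add_odd hsin' hcos'
  have hfull := (hasSum_nat_add_iff
      (f := fun n : ℕ => ((n ! : ℝ))⁻¹ • (s • nhat) ^ n) 1).mp hshift
  have h0 : (∑ i ∈ Finset.range 1, ((i ! : ℝ))⁻¹ • (s • nhat) ^ i)
      = (1 : Matrix (Fin 3) (Fin 3) ℝ) := by simp
  rw [h0] at hfull
  simp only [NormedSpace.exp_eq_tsum (𝕂 := ℝ)]
  rw [hfull.tsum_eq]
  abel
end
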